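/- arXiv:1507.01219 — 2 statements merged into one kernel-verified Lean document; each statement's English description precedes it below -/
import Mathlib

section
/- Let 0 < q < 1 and define n_k = n_0 + k(k+1)/2 for k ≥ 0 (equivalently n_k = n_{k−1} + k). Then ∑_{k≥0} ∑_{l≥1} q^{(n_{k+l} − n_k)/4} ≤ q^{1/4} / ((1 − q^{1/4})·(1 − q^{1/8})). -/
/-- For `0 < q < 1` and the lacunary sequence `n_k = n_0 + k(k+1)/2` (i.e.
`n_k = n_{k-1} + k`), one has
`∑_{k≥0} ∑_{l≥1} q^((n_{k+l} − n_k)/4) ≤ q^(1/4) / ((1 − q^(1/4))·(1 − q^(1/8)))`. -/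
theorem lacunary_double_sum_le (q : ℝ) (hq0 : 0 < q) (hq1 : q < 1)
    (n : ℕ → ℕ) (hn : ∀ k, n k = n 0 + k * (k + 1) / 2) :
    ∑' k : ℕ, ∑' l : ℕ,
        q ^ ((((n (k + (l + 1)) : ℝ)) - (n k : ℝ)) / 4)
      ≤ q ^ ((1 : ℝ) / 4) / ((1 - q ^ ((1 : ℝ) / 4)) * (1 - q ^ ((1 : ℝ) / 8))) := by
  have hq0' : (0:ℝ) ≤ q := hq0.le
  set a := q ^ ((1:ℝ)/4) with ha
  set b := q ^ ((1:ℝ)/8) with hb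
  have ha0 : 0 < a := Real.rpow_pos_of_pos hq0 _
  have ha1 : a < 1 := Real.rpow_lt_one hq0' hq1 (by norm_num)
  have hb0 : 0 < b := Real.rpow_pos_of_pos hq0 _
  have hb1 : b < 1 := Real.rpow_lt_one hq0' hq1 (by norm_num)
  have hcast : ∀ m : ℕ, ((m*(m+1)/2 : ℕ) : ℝ) = (m:ℝ)*((m:ℝ)+1)/2 := by
    intro m
    have h := Nat.div_mul_cancel ((Nat.even_mul_succ_self m).two_dvd)
    have h2 := congrArg (Nat.cast : ℕ → ℝ) h
    push_cast at h2
    linarith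
  set f : ℕ → ℕ → ℝ := fun k l => q ^ ((((n (k + (l + 1)) : ℝ)) - (n k : ℝ)) / 4) with hf
  have hfnn : ∀ k l, 0 ≤ f k l := fun k l => Real.rpow_nonneg hq0' _
  have key : ∀ k l : ℕ, f k l ≤ a ^ (l+1) * b ^ k := by
    intro k l
    have hd : (((n (k + (l + 1)) : ℝ)) - (n k : ℝ))/4
        = ((l:ℝ)+1) * (2*(k:ℝ)+(l:ℝ)+2) / 8 := by
      rw [hn (k+(l+1)), hn k]
      push_cast [hcast]
      ring
    rw [hf]
    simp only [hd]
    have hle : ((l:ℝ)+1)/4 + (k:ℝ)/8 ≤ ((l:ℝ)+1) * (2*(k:ℝ)+(l:ℝ)+2) / 8 := by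
      have hk : (0:ℝ) ≤ (k:ℝ) := Nat.cast_nonneg k
      have hl : (0:ℝ) ≤ (l:ℝ) := Nat.cast_nonneg l
      nlinarith
    calc q ^ (((l:ℝ)+1) * (2*(k:ℝ)+(l:ℝ)+2) / 8)
        ≤ q ^ (((l:ℝ)+1)/4 + (k:ℝ)/8) :=
          Real.rpow_le_rpow_of_exponent_ge hq0 hq1.le hle
      _ = a ^ (l+1) * b ^ k := by
          rw [Real.rpow_add hq0]
          congr 1
          · rw [ha, ← Real.rpow_natCast (q ^ ((1:ℝ)/4)) (l+1), ← Real.rpow_mul hq0']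
            congr 1
            push_cast
            ring
          · rw [hb, ← Real.rpow_natCast (q ^ ((1:ℝ)/8)) k, ← Real.rpow_mul hq0']
            congr 1
            ring
  have hga : Summable (fun l : ℕ => a ^ (l+1)) := by
    simpa [pow_succ, mul_comm] using (summable_geometric_of_lt_one ha0.le ha1).mul_left a
  have hgk : ∀ k : ℕ, Summable (fun l : ℕ => a ^ (l+1) * b ^ k) := fun k =>
    hga.mul_right _
  have hSa : ∑' l : ℕ, a ^ (l+1) = a * (1 - a)⁻¹ := by
    simp only [pow_succ, mul_comm (a ^ _) a]
    rw [tsum_mul_left, tsum_geometric_of_lt_one ha0.le ha1]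
  have hfk : ∀ k, Summable (f k) := fun k =>
    Summable.of_nonneg_of_le (hfnn k) (key k) (hgk k)
  have hinner : ∀ k, ∑' l, f k l ≤ (a * (1 - a)⁻¹) * b ^ k := by
    intro k
    calc ∑' l, f k l ≤ ∑' l : ℕ, a ^ (l+1) * b ^ k :=
          Summable.tsum_le_tsum (key k) (hfk k) (hgk k)
      _ = (a * (1 - a)⁻¹) * b ^ k := by rw [tsum_mul_right, hSa]
  have hgb : Summable (fun k : ℕ => (a * (1 - a)⁻¹) * b ^ k) :=
    (summable_geometric_of_lt_one hb0.le hb1).mul_left _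
  have houter : Summable (fun k => ∑' l, f k l) :=
    Summable.of_nonneg_of_le (fun k => tsum_nonneg (hfnn k)) hinner hgb
  have h1a : 0 < 1 - a := by linarith
  have h1b : 0 < 1 - b := by linarith
  calc ∑' k, ∑' l, f k l ≤ ∑' k : ℕ, (a * (1 - a)⁻¹) * b ^ k :=
        Summable.tsum_le_tsum hinner houter hgb
    _ = (a * (1 - a)⁻¹) * (1 - b)⁻¹ := by
        rw [tsum_mul_left, tsum_geometric_of_lt_one hb0.le hb1]
    _ = a / ((1 - a) * (1 - b)) := by
        field_simp
end

section
/- Let A be a unital C*-algebra, n ≥ 1, u ∈ Mₙ(A) a unitary matrix, Q ∈ Mₙ(ℂ) a positive invertible matrix with d = Tr(Q), V ∈ Mₙ(ℂ) a unitary matrix, and B ∈ Mₙ(ℂ) arbitrary. Then ‖(ι ⊗ Tr)[(1 ⊗ V·B·Q)·u]‖² ≤ d · Tr(B*·B·Q), where (ι ⊗ Tr)[(1 ⊗ M)·u] = ∑_{i,j} M_{ji} u_{ij} ∈ A. -/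
open scoped ComplexOrder

/-- Let `A` be a unital C*-algebra, `u ∈ Mₙ(A)` a unitary matrix, `Q` a positive invertible
complex `n × n` matrix with `d = Tr Q`, `V` a unitary complex matrix and `B` an arbitrary
complex matrix. Then `‖(ι ⊗ Tr)[(1 ⊗ V·B·Q)·u]‖² ≤ d · Tr(B*·B·Q)`, where
`(ι ⊗ Tr)[(1 ⊗ M)·u] = ∑_{i,j} M_{ji} u_{ij}`. -/
theorem norm_sq_trace_mul_unitary_le {A : Type*} [NormedRing A] [StarRing A] [CStarRing A]
    [NormedAlgebra ℂ A] [StarModule ℂ A] [CompleteSpace A]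
    {n : ℕ} (hn : 1 ≤ n)
    (u : Matrix (Fin n) (Fin n) A)
    (hu₁ : star u * u = 1) (hu₂ : u * star u = 1)
    (Q : Matrix (Fin n) (Fin n) ℂ) (hQ : Q.PosDef)
    (d : ℝ) (hd : Q.trace = (d : ℂ))
    (V : Matrix (Fin n) (Fin n) ℂ) (hV : star V * V = 1)
    (B : Matrix (Fin n) (Fin n) ℂ) :
    ‖∑ i : Fin n, ∑ j : Fin n, (V * B * Q) j i • u i j‖ ^ 2
      ≤ d * ((B.conjTranspose * B * Q).trace).re := by
  letI : CStarAlgebra A := ⟨⟩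
  letI := CStarAlgebra.spectralOrder A
  haveI := CStarAlgebra.spectralOrderedRing A
  obtain ⟨C, hC⟩ : ∃ C : Matrix (Fin n) (Fin n) ℂ, Q = C.conjTranspose * C := by
    open scoped MatrixOrder in
    obtain ⟨X, hX, -, hXQ⟩ :=
      sub_zero Q ▸ CFC.exists_sqrt_of_isSelfAdjoint_of_quasispectrumRestricts
        hQ.posSemidef.isHermitian (QuasispectrumRestricts.nnreal_of_nonneg hQ.posSemidef.nonneg)
    exact ⟨X, by rw [← Matrix.star_eq_conjTranspose, hX.star_eq, hXQ, sub_zero]⟩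
  set S : Matrix (Fin n) (Fin n) ℂ := V * B * C.conjTranspose with hS
  set γ : ℝ := ∑ j : Fin n, ∑ k : Fin n, Complex.normSq (S j k) with hγ
  have hγ0 : 0 ≤ γ :=
    Finset.sum_nonneg fun _ _ => Finset.sum_nonneg fun _ _ => Complex.normSq_nonneg _
  have h1 : S * S.conjTranspose = V * (B * Q * B.conjTranspose) * V.conjTranspose := by
    rw [hS, hC]
    simp only [Matrix.conjTranspose_mul, Matrix.conjTranspose_conjTranspose, Matrix.mul_assoc]
  have h2 : (S * S.conjTranspose).trace = (γ : ℂ) := by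
    rw [hγ]
    push_cast
    simp [Matrix.trace, Matrix.diag, Matrix.mul_apply, Matrix.conjTranspose_apply,
      Complex.mul_conj]
  have hVV : V.conjTranspose * V = 1 := by rwa [← Matrix.star_eq_conjTranspose]
  have htr : (B.conjTranspose * B * Q).trace = (γ : ℂ) := by
    rw [← h2, h1, Matrix.trace_mul_cycle V (B * Q * B.conjTranspose) V.conjTranspose,
      hVV, Matrix.one_mul]
    exact (Matrix.trace_mul_cycle B Q B.conjTranspose).symm
  have hre : ((B.conjTranspose * B * Q).trace).re = γ := by rw [htr]; simp
  have hQtr : Q.trace = ((∑ i : Fin n, ∑ k : Fin n, Complex.normSq (C k i) : ℝ) : ℂ) := by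
    rw [hC]
    push_cast
    simp [Matrix.trace, Matrix.diag, Matrix.mul_apply, Matrix.conjTranspose_apply,
      ← Complex.normSq_eq_conj_mul_self]
  have hd0 : 0 ≤ d := by
    have h3 : ((∑ i : Fin n, ∑ k : Fin n, Complex.normSq (C k i) : ℝ) : ℂ) = (d : ℂ) := by
      rw [← hQtr, hd]
    have h4 : (∑ i : Fin n, ∑ k : Fin n, Complex.normSq (C k i) : ℝ) = d := by
      exact_mod_cast h3
    rw [← h4]
    exact Finset.sum_nonneg fun _ _ => Finset.sum_nonneg fun _ _ => Complex.normSq_nonneg _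
  rcases subsingleton_or_nontrivial A with hA | hA
  · rw [norm_eq_zero.mpr (Subsingleton.elim _ (0 : A)), hre]
    simpa using mul_nonneg hd0 hγ0
  · -- main case
    set v : WithCStarModule A ((Fin n × Fin n) → A) :=
      (WithCStarModule.equiv A _).symm fun p => C p.2 p.1 • (1 : A) with hv
    set w : WithCStarModule A ((Fin n × Fin n) → A) :=
      (WithCStarModule.equiv A _).symm fun p => star (∑ j, S j p.2 • u p.1 j) with hw
    have hvp : ∀ p : Fin n × Fin n, v p = C p.2 p.1 • (1 : A) := fun p => rfl
    have hwp : ∀ p : Fin n × Fin n, w p = star (∑ j, S j p.2 • u p.1 j) := fun p => rfl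
    have hSC : V * B * Q = S * C := by
      rw [hS, hC]
      simp only [Matrix.mul_assoc]
    -- orthonormality of the columns of u
    have huu : ∀ j j' : Fin n, (∑ i, star (u i j) * u i j') = if j = j' then (1 : A) else 0 := by
      intro j j'
      have h6 := congrFun (congrFun hu₁ j) j'
      simpa [Matrix.mul_apply, Matrix.one_apply, Matrix.star_apply] using h6
    -- rows against scalar vectors
    have inner_row : ∀ t : Fin n → ℂ,
        (∑ i, star (∑ j, t j • u i j) * (∑ j, t j • u i j))
          = ((∑ j, Complex.normSq (t j) : ℝ) : ℂ) • (1 : A) := by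
      intro t
      have hexp : ∀ i, star (∑ j, t j • u i j) * (∑ j, t j • u i j)
          = ∑ j, ∑ j', ((starRingEnd ℂ) (t j) * t j') • (star (u i j) * u i j') := by
        intro i
        rw [star_sum, Finset.sum_mul]
        refine Finset.sum_congr rfl fun j _ => ?_
        rw [star_smul, Finset.mul_sum]
        refine Finset.sum_congr rfl fun j' _ => ?_
        rw [smul_mul_assoc, mul_smul_comm, smul_smul]
        rfl
      rw [Finset.sum_congr rfl fun i _ => hexp i, Finset.sum_comm]
      calc ∑ j, ∑ i, ∑ j', ((starRingEnd ℂ) (t j) * t j') • (star (u i j) * u i j')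
          = ∑ j, ∑ j', ((starRingEnd ℂ) (t j) * t j') • (∑ i, star (u i j) * u i j') := by
            refine Finset.sum_congr rfl fun j _ => ?_
            rw [Finset.sum_comm]
            refine Finset.sum_congr rfl fun j' _ => ?_
            rw [Finset.smul_sum]
        _ = ∑ j, ((starRingEnd ℂ) (t j) * t j) • (1 : A) := by
            refine Finset.sum_congr rfl fun j _ => ?_
            rw [Finset.sum_congr rfl fun j' _ => by rw [huu j j']]
            simp
        _ = ((∑ j, Complex.normSq (t j) : ℝ) : ℂ) • (1 : A) := by
            rw [← Finset.sum_smul]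
            congr 1
            push_cast
            exact Finset.sum_congr rfl fun j _ => by
              rw [← Complex.normSq_eq_conj_mul_self]
    -- the element equals the inner product ⟪v, w⟫
    have hx : (∑ i : Fin n, ∑ j : Fin n, (V * B * Q) j i • u i j) = (inner A w v : A) := by
      rw [WithCStarModule.pi_inner]
      calc ∑ i : Fin n, ∑ j : Fin n, (V * B * Q) j i • u i j
          = ∑ i : Fin n, ∑ j : Fin n, ∑ k : Fin n, (S j k * C k i) • u i j := by
            refine Finset.sum_congr rfl fun i _ => Finset.sum_congr rfl fun j _ => ?_
            rw [hSC, Matrix.mul_apply, Finset.sum_smul]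
        _ = ∑ i : Fin n, ∑ k : Fin n, ∑ j : Fin n, (C k i * S j k) • u i j := by
            refine Finset.sum_congr rfl fun i _ => ?_
            rw [Finset.sum_comm]
            exact Finset.sum_congr rfl fun k _ => Finset.sum_congr rfl fun j _ => by
              rw [mul_comm]
        _ = ∑ p : Fin n × Fin n, (inner A (w p) (v p) : A) := by
            rw [Fintype.sum_prod_type]
            refine Finset.sum_congr rfl fun i _ => Finset.sum_congr rfl fun k _ => ?_
            rw [WithCStarModule.inner_def, hvp, hwp, star_star, smul_mul_assoc, one_mul,
              Finset.smul_sum]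
            refine Eq.symm (Finset.sum_congr rfl fun j _ => ?_)
            rw [smul_smul]
    -- inner v v
    have hvv : (inner A v v : A) = ((d : ℝ) : ℂ) • (1 : A) := by
      rw [WithCStarModule.pi_inner]
      have hterm : ∀ p : Fin n × Fin n, (inner A (v p) (v p) : A)
          = ((Complex.normSq (C p.2 p.1) : ℝ) : ℂ) • (1 : A) := by
        intro p
        rw [WithCStarModule.inner_def, hvp, star_smul, star_one, smul_mul_assoc, one_mul,
          smul_smul]
        congr 1
        rw [Complex.normSq_eq_conj_mul_self]
        simp [mul_comm]
      rw [Finset.sum_congr rfl fun p _ => hterm p, ← Finset.sum_smul]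
      congr 1
      have : ((d : ℝ) : ℂ) = Q.trace := hd.symm
      rw [this, hQtr, Fintype.sum_prod_type]
      push_cast
      rfl
    -- inner w w
    have hww : (inner A w w : A) = ((γ : ℝ) : ℂ) • (1 : A) := by
      rw [WithCStarModule.pi_inner]
      have hterm : ∀ p : Fin n × Fin n, (inner A (w p) (w p) : A)
          = star (∑ j, S j p.2 • u p.1 j) * (∑ j, S j p.2 • u p.1 j) := by
        intro p
        rw [WithCStarModule.inner_def, hwp, star_star]
      calc ∑ p : Fin n × Fin n, (inner A (w p) (w p) : A)
          = ∑ k : Fin n, ∑ i : Fin n,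
              star (∑ j, S j k • u i j) * (∑ j, S j k • u i j) := by
            rw [Finset.sum_congr rfl fun p _ => hterm p, Fintype.sum_prod_type,
              Finset.sum_comm]
        _ = ∑ k : Fin n, ((∑ j, Complex.normSq (S j k) : ℝ) : ℂ) • (1 : A) := by
            exact Finset.sum_congr rfl fun k _ => inner_row fun j => S j k
        _ = ((γ : ℝ) : ℂ) • (1 : A) := by
            rw [← Finset.sum_smul]
            congr 1
            rw [hγ]
            push_cast
            rw [Finset.sum_comm]
    have hcs := CStarModule.norm_inner_le (A := A)
      (WithCStarModule A ((Fin n × Fin n) → A)) (x := w) (y := v)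
    have hnv : ‖v‖ ^ 2 = d := by
      rw [CStarModule.norm_sq_eq (A := A), hvv]
      simp [norm_smul, Complex.norm_of_nonneg hd0, abs_of_nonneg hd0]
    have hnw : ‖w‖ ^ 2 = γ := by
      rw [CStarModule.norm_sq_eq (A := A), hww]
      simp [norm_smul, Complex.norm_of_nonneg hγ0, abs_of_nonneg hγ0]
    calc ‖∑ i : Fin n, ∑ j : Fin n, (V * B * Q) j i • u i j‖ ^ 2
        = ‖(inner A w v : A)‖ ^ 2 := by rw [hx]
      _ ≤ (‖w‖ * ‖v‖) ^ 2 := by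
          exact pow_le_pow_left₀ (norm_nonneg _) hcs 2
      _ = ‖v‖ ^ 2 * ‖w‖ ^ 2 := by rw [mul_pow, mul_comm]
      _ = d * γ := by rw [hnv, hnw]
      _ = d * ((B.conjTranspose * B * Q).trace).re := by rw [hre]
end
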